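/- Let G be a star graph on vertex set {x_1,...,x_n} with n ≥ 5, center x_1 and edges {x_1,x_i} for 2 ≤ i ≤ n. Then I_c(G) equals the intersection over all pairs 2 ≤ r < s ≤ n of the prime ideals (x_r, x_s), and the product x_2 x_3 ⋯ x_n lies in the second symbolic power I_c(G)^(2). -/

import Mathlib

open MvPolynomial

noncomputable def symbPow {R : Type*} [CommRing R] (I : Ideal R) (k : ℕ) : Ideal R :=
  ⨅ p ∈ I.minimalPrimes, p ^ k

noncomputable def compIdeal {V : Type*} [Fintype V] [DecidableEq V]
    (K : Type*) [Field K] (G : SimpleGraph V) : Ideal (MvPolynomial V K) :=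
  Ideal.span {m | ∃ i j, G.Adj i j ∧ m = ∏ l ∈ Finset.univ \ {i, j}, X l}

section Aux

variable {σ : Type*} {K : Type*} [Field K]

lemma prod_X_eq_monomial' [DecidableEq σ] (s : Finset σ) :
    (∏ l ∈ s, (X l : MvPolynomial σ K)) = monomial (∑ l ∈ s, Finsupp.single l 1) 1 := by
  classical
  induction s using Finset.induction with
  | empty => simp
  | insert _ _ h ih =>
      rw [Finset.prod_insert h, Finset.sum_insert h, ih, X, monomial_mul, one_mul]

lemma isPrime_span_X_image (s : Set σ) :
    (Ideal.span (X '' s : Set (MvPolynomial σ K))).IsPrime := by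
  classical
  set f : σ → MvPolynomial σ K := fun i => if i ∈ s then 0 else X i with hf
  have hker : Ideal.span (X '' s : Set (MvPolynomial σ K))
      = RingHom.ker (aeval (R := K) f).toRingHom := by
    apply le_antisymm
    · rw [Ideal.span_le]
      rintro _ ⟨i, hi, rfl⟩
      simp [RingHom.mem_ker, hf, hi]
    · intro p hp
      rw [mem_ideal_span_X_image]
      intro m hm
      by_contra hcon
      push_neg at hcon
      have key : coeff m (aeval f p) = coeff m p := by
        conv_lhs => rw [p.as_sum]
        rw [map_sum, coeff_sum]
        rw [Finset.sum_eq_single_of_mem m hm]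
        · rw [aeval_monomial]
          have hprod : (m.prod fun i k => f i ^ k)
              = m.prod fun i k => (X i : MvPolynomial σ K) ^ k := by
            apply Finsupp.prod_congr
            intro i hi
            have his : i ∉ s := fun h => (Finsupp.mem_support_iff.mp hi) (hcon i h)
            simp [hf, his]
          rw [hprod, MvPolynomial.algebraMap_eq, ← monomial_eq]
          simp
        · intro d hd hdm
          rw [aeval_monomial]
          by_cases hds : ∃ i ∈ d.support, i ∈ s
          · obtain ⟨i, hi, his⟩ := hds
            have : (d.prod fun i k => f i ^ k) = 0 := by
              apply Finset.prod_eq_zero hi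
              simp [hf, his, zero_pow (Finsupp.mem_support_iff.mp hi)]
            rw [this, mul_zero, coeff_zero]
          · push_neg at hds
            have hprod : (d.prod fun i k => f i ^ k)
                = d.prod fun i k => (X i : MvPolynomial σ K) ^ k := by
              apply Finsupp.prod_congr
              intro i hi
              simp [hf, hds i hi]
            rw [hprod, MvPolynomial.algebraMap_eq, ← monomial_eq, coeff_monomial, if_neg hdm]
      have h0 : coeff m (aeval f p) = 0 := by
        rw [show aeval f p = 0 from hp, coeff_zero]
      exact (mem_support_iff.mp hm) (key.symm.trans h0)
  rw [hker]
  exact RingHom.ker_isPrime _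

end Aux

/-- For the star graph on `n ≥ 5` vertices with center `z`, the complementary edge ideal is
the intersection of the primes `(x_r, x_s)` over pairs of non-central vertices, and the
product of all non-central variables lies in the second symbolic power. -/
theorem stmt11 {n : ℕ} (hn : 5 ≤ n) (K : Type*) [Field K]
    (z : Fin n) (hz : (z : ℕ) = 0)
    (G : SimpleGraph (Fin n))
    (hG : ∀ i j, G.Adj i j ↔ i ≠ j ∧ (i = z ∨ j = z)) :
    (compIdeal K G =
      ⨅ p ∈ {p : Fin n × Fin n | p.1 ≠ z ∧ p.2 ≠ z ∧ p.1 ≠ p.2},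
        Ideal.span ({X p.1, X p.2} : Set (MvPolynomial (Fin n) K))) ∧
    (∏ i ∈ Finset.univ.erase z, (X i : MvPolynomial (Fin n) K)) ∈
      symbPow (compIdeal K G) 2 := by
  classical
  set S : Set (Fin n × Fin n) := {p : Fin n × Fin n | p.1 ≠ z ∧ p.2 ≠ z ∧ p.1 ≠ p.2} with hS
  set D : Fin n → (Fin n →₀ ℕ) :=
    fun i => ∑ l ∈ Finset.univ \ {z, i}, Finsupp.single l 1 with hD
  have Dval : ∀ i l : Fin n, D i l = if l ∈ Finset.univ \ ({z, i} : Finset (Fin n)) then 1 else 0 := by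
    intro i l
    rw [hD]
    rw [Finset.sum_apply']
    simp [Finsupp.single_apply]
  have hpair : ∀ a b : Fin n, ({X a, X b} : Set (MvPolynomial (Fin n) K)) = X '' {a, b} := by
    intro a b
    rw [Set.image_pair]
  -- generators of compIdeal as a monomial ideal
  have hgen : compIdeal K G
      = Ideal.span ((fun d => monomial d (1 : K)) '' {d | ∃ i, i ≠ z ∧ d = D i}) := by
    have hDmon : ∀ i : Fin n, (monomial (D i) (1 : K))
        = ∏ l ∈ Finset.univ \ ({z, i} : Finset (Fin n)), X l := by
      intro i
      rw [hD]
      exact (prod_X_eq_monomial' _).symm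
    unfold compIdeal
    congr 1
    ext m
    constructor
    · rintro ⟨i, j, hadj, rfl⟩
      rw [hG] at hadj
      obtain ⟨hij, hzz⟩ := hadj
      rcases hzz with h | h
      · refine ⟨D j, ⟨j, Ne.symm (h ▸ hij), rfl⟩, ?_⟩
        rw [h]
        exact hDmon j
      · refine ⟨D i, ⟨i, h ▸ hij, rfl⟩, ?_⟩
        rw [h, Finset.pair_comm i z]
        exact hDmon i
    · rintro ⟨d, ⟨i, hiz, rfl⟩, rfl⟩
      exact ⟨z, i, (hG z i).mpr ⟨Ne.symm hiz, Or.inl rfl⟩, hDmon i⟩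
  -- the main equality
  have part1 : compIdeal K G
      = ⨅ p ∈ S, Ideal.span ({X p.1, X p.2} : Set (MvPolynomial (Fin n) K)) := by
    ext q
    rw [hgen, mem_ideal_span_monomial_image]
    simp only [Submodule.mem_iInf]
    constructor
    · intro h pr hpr
      obtain ⟨h1, h2, h3⟩ := hpr
      rw [hpair, mem_ideal_span_X_image]
      intro m hm
      obtain ⟨d, ⟨i, hiz, rfl⟩, hle⟩ := h m hm
      by_cases hri : pr.1 = i
      · refine ⟨pr.2, Or.inr rfl, ?_⟩
        have hmem : pr.2 ∈ Finset.univ \ ({z, i} : Finset (Fin n)) := by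
          simp [h2, hri ▸ (Ne.symm h3)]
        have := hle pr.2
        rw [Dval, if_pos hmem] at this
        omega
      · refine ⟨pr.1, Or.inl rfl, ?_⟩
        have hmem : pr.1 ∈ Finset.univ \ ({z, i} : Finset (Fin n)) := by
          simp [h1, hri]
        have := hle pr.1
        rw [Dval, if_pos hmem] at this
        omega
    · intro h m hm
      by_cases hall : ∀ l, l ≠ z → m l ≠ 0
      · have h1n : (1 : ℕ) < n := by omega
        set i₀ : Fin n := ⟨1, h1n⟩ with hi₀
        have hi₀z : i₀ ≠ z := by
          intro hc
          rw [Fin.ext_iff, hz] at hc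
          simp [hi₀] at hc
        refine ⟨D i₀, ⟨i₀, hi₀z, rfl⟩, fun l => ?_⟩
        rw [Dval]
        split
        · next hmem =>
            have hlz : l ≠ z := by
              simp at hmem
              exact hmem.1
            exact Nat.one_le_iff_ne_zero.mpr (hall l hlz)
        · exact Nat.zero_le _
      · push_neg at hall
        obtain ⟨i, hiz, hmi⟩ := hall
        refine ⟨D i, ⟨i, hiz, rfl⟩, fun l => ?_⟩
        rw [Dval]
        split
        · next hmem =>
            simp at hmem
            obtain ⟨hlz, hli⟩ := hmem
            have := h (i, l) ⟨hiz, hlz, Ne.symm hli⟩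
            rw [hpair, mem_ideal_span_X_image] at this
            obtain ⟨j, hj, hmj⟩ := this m hm
            rcases hj with rfl | rfl
            · exact absurd hmi hmj
            · exact Nat.one_le_iff_ne_zero.mpr hmj
        · exact Nat.zero_le _
  refine ⟨part1, ?_⟩
  -- each minimal prime is one of the (X r, X s)
  have hSprime : ∀ pr : Fin n × Fin n,
      (Ideal.span ({X pr.1, X pr.2} : Set (MvPolynomial (Fin n) K))).IsPrime := by
    intro pr
    rw [hpair]
    exact isPrime_span_X_image _
  have hmin : ∀ P ∈ (compIdeal K G).minimalPrimes,
      ∃ pr ∈ S, P = Ideal.span ({X pr.1, X pr.2} : Set (MvPolynomial (Fin n) K)) := by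
    intro P hP
    obtain ⟨⟨hPprime, hIP⟩, hPmin⟩ := hP
    set T : Finset (Fin n × Fin n) := Finset.univ.filter (· ∈ S) with hT
    have hinf : T.inf (fun pr => Ideal.span ({X pr.1, X pr.2} : Set (MvPolynomial (Fin n) K)))
        = ⨅ pr ∈ S, Ideal.span ({X pr.1, X pr.2} : Set (MvPolynomial (Fin n) K)) := by
      rw [Finset.inf_eq_iInf]
      exact iInf_congr fun pr => iInf_congr_Prop (by simp [hT]) (fun _ => rfl)
    have hle : T.inf (fun pr => Ideal.span ({X pr.1, X pr.2} : Set (MvPolynomial (Fin n) K))) ≤ P := by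
      rw [hinf, ← part1]; exact hIP
    obtain ⟨pr, hprT, hle'⟩ := (Ideal.IsPrime.inf_le' hPprime).mp hle
    have hprS : pr ∈ S := by
      rw [hT] at hprT
      simpa using hprT
    refine ⟨pr, hprS, le_antisymm ?_ hle'⟩
    refine hPmin ⟨hSprime pr, ?_⟩ hle'
    rw [part1]
    exact iInf₂_le pr hprS
  -- final membership
  rw [symbPow]
  simp only [Submodule.mem_iInf]
  intro P hP
  obtain ⟨pr, hprS, rfl⟩ := hmin P hP
  obtain ⟨h1, h2, h3⟩ := hprS
  have hr : pr.1 ∈ Finset.univ.erase z := by simp [h1]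
  rw [← Finset.mul_prod_erase _ _ hr]
  have hs : pr.2 ∈ (Finset.univ.erase z).erase pr.1 := by
    simp [h2, Ne.symm h3]
  rw [← Finset.mul_prod_erase _ _ hs, sq]
  exact Ideal.mul_mem_mul (Ideal.subset_span (Set.mem_insert _ _))
    (Ideal.mul_mem_right _ _ (Ideal.subset_span (Set.mem_insert_of_mem _ rfl)))
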